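/- Let λ = [[b/2, −a], [c, −b/2]] with a, b, c ∈ ℤ, (a,c) ≠ (0,0), and let μ ∈ {0,1} with b ≡ μ (mod 2); assume λ is primitive (gcd(b/2,a,c) = 1 if μ = 0, gcd(a,b,c) = 1 if μ = 1). Let g = gcd(a,c) and choose u, v ∈ ℤ with a·v − u·c = g. Set l₁ = [[g, b·u], [b·v, −g]] and l₂ = [[0, a/g], [c/g, 0]]. Then the lattice P = L ∩ λ^⊥ (the integral trace-zero matrices B-orthogonal to λ) equals ℤ·(l₁/2) ⊕ ℤ·l₂ if μ = 0 and g is even, and equals ℤ·l₁ ⊕ ℤ·l₂ otherwise. -/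

import Mathlib

open Matrix

/-- Membership in the lattice `L` of integral trace-zero 2×2 matrices. -/
def memL (m : Matrix (Fin 2) (Fin 2) ℚ) : Prop :=
  ∃ a b c : ℤ, m = !![(b : ℚ), (c : ℚ); -(a : ℚ), -(b : ℚ)]


theorem key (a c g u v w hh s a₁ c₁ : ℤ) (hg0 : g ≠ 0) (hgsh : g = s * hh)
    (ha : a = g * a₁) (hc : c = g * c₁) (huv : a * v - u * c = g)
    (hgw : IsCoprime g w) (A B C : ℤ) :
    a * A + (s * w) * B + c * C = 0 ↔
      ∃ m n : ℤ, B = m * hh ∧ C = m * (w * u) + n * a₁ ∧ A = -(m * (w * v)) - n * c₁ := by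
  have hunit : a₁ * v - u * c₁ = 1 := by
    have h2 : g * (a₁ * v - u * c₁) = g * 1 := by linear_combination huv - v * ha + u * hc
    exact mul_left_cancel₀ hg0 h2
  constructor
  · intro heq
    have hs0 : s ≠ 0 := fun h => hg0 (by rw [hgsh, h, zero_mul])
    have hh0 : hh ≠ 0 := fun h => hg0 (by rw [hgsh, h, mul_zero])
    have hdvd1 : g ∣ w * (s * B) := ⟨-(a₁ * A + c₁ * C), by linear_combination heq - A * ha - C * hc⟩
    have hdvd2 : g ∣ s * B := hgw.dvd_of_dvd_mul_left hdvd1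
    have hdvd3 : hh ∣ B := by
      rw [hgsh] at hdvd2
      exact (mul_dvd_mul_iff_left hs0).mp hdvd2
    obtain ⟨m, hm⟩ := hdvd3
    rw [mul_comm] at hm
    set A' := A + m * (w * v) with hA'
    set C' := C - m * (w * u) with hC'
    have h1 : g * (a₁ * A' + c₁ * C') = 0 := by
      simp only [hA', hC']
      linear_combination heq - (A + m * (w * v)) * ha - (C - m * (w * u)) * hc
        + (m * w) * huv + (m * w) * hgsh - (s * w) * hm
    have h2 : a₁ * A' + c₁ * C' = 0 := by
      rcases mul_eq_zero.mp h1 with h | h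
      · exact absurd h hg0
      · exact h
    refine ⟨m, v * C' + u * A', hm, ?_, ?_⟩
    · simp only [hA', hC'] at h2 hunit ⊢
      linear_combination -(C - m * (w * u)) * hunit - u * h2
    · simp only [hA', hC'] at h2 hunit ⊢
      linear_combination -(A + m * (w * v)) * hunit + v * h2
  · rintro ⟨m, n, hB, hC, hA⟩
    linear_combination a * hA + (s * w) * hB + c * hC - (m * w) * huv
      - (m * w) * hgsh + n * a₁ * hc - n * c₁ * ha

theorem tracecalc (a b c A B C : ℤ) (lam : Matrix (Fin 2) (Fin 2) ℚ)
    (hlam : lam = !![(b : ℚ) / 2, -(a : ℚ); (c : ℚ), -(b : ℚ) / 2]) :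
    Matrix.trace (!![(B : ℚ), (C : ℚ); -(A : ℚ), -(B : ℚ)] * lam)
      = ((a * A + b * B + c * C : ℤ) : ℚ) := by
  subst hlam
  simp [Matrix.trace_fin_two, Matrix.mul_apply, Fin.sum_univ_two]
  push_cast
  ring

theorem core (a b c g u v w hh s a₁ c₁ : ℤ) (hg0 : g ≠ 0) (hgsh : g = s * hh)
    (hb : b = s * w) (ha : a = g * a₁) (hc : c = g * c₁) (huv : a * v - u * c = g)
    (hgw : IsCoprime g w)
    (lam M₁ M₂ : Matrix (Fin 2) (Fin 2) ℚ)
    (hlam : lam = !![(b : ℚ) / 2, -(a : ℚ); (c : ℚ), -(b : ℚ) / 2])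
    (hM₁ : M₁ = !![(hh : ℚ), ((w * u : ℤ) : ℚ); ((w * v : ℤ) : ℚ), -(hh : ℚ)])
    (hM₂ : M₂ = !![0, (a₁ : ℚ); (c₁ : ℚ), 0]) :
    (∀ x : Matrix (Fin 2) (Fin 2) ℚ,
      (memL x ∧ Matrix.trace (x * lam) = 0) ↔
        ∃ m n : ℤ, x = (m : ℚ) • M₁ + (n : ℚ) • M₂) ∧
    (∀ m n : ℤ, (m : ℚ) • M₁ + (n : ℚ) • M₂ = 0 → m = 0 ∧ n = 0) := by
  have hh0 : hh ≠ 0 := fun h => hg0 (by rw [hgsh, h, mul_zero])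
  have hkey := fun A B C => key a c g u v w hh s a₁ c₁ hg0 hgsh ha hc huv hgw A B C
  constructor
  · intro x
    constructor
    · rintro ⟨⟨A, B, C, rfl⟩, htr⟩
      rw [tracecalc a b c A B C lam hlam] at htr
      have htr' : a * A + b * B + c * C = 0 := by exact_mod_cast htr
      rw [hb] at htr'
      obtain ⟨m, n, hB, hC, hA⟩ := (hkey A B C).mp htr'
      refine ⟨m, n, ?_⟩
      subst hM₁ hM₂
      ext i j
      fin_cases i <;> fin_cases j <;>
        simp [Matrix.add_apply, Matrix.smul_apply] <;>
        push_cast <;>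
        [skip; (rw [hC]; push_cast; ring); (rw [hA]; push_cast; ring);
         (rw [hB]; push_cast; ring)]
      rw [hB]; push_cast; ring
    · rintro ⟨m, n, rfl⟩
      constructor
      · refine ⟨-(m * (w * v)) - n * c₁, m * hh, m * (w * u) + n * a₁, ?_⟩
        subst hM₁ hM₂
        ext i j
        fin_cases i <;> fin_cases j <;>
          simp [Matrix.add_apply, Matrix.smul_apply] <;> push_cast <;> ring
      · have hx : ((m : ℚ) • M₁ + (n : ℚ) • M₂)
            = !![((m * hh : ℤ) : ℚ), ((m * (w * u) + n * a₁ : ℤ) : ℚ);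
                 -((-(m * (w * v)) - n * c₁ : ℤ) : ℚ), -((m * hh : ℤ) : ℚ)] := by
          subst hM₁ hM₂
          ext i j
          fin_cases i <;> fin_cases j <;>
            simp [Matrix.add_apply, Matrix.smul_apply] <;> push_cast <;> ring
        rw [hx, tracecalc a b c _ _ _ lam hlam]
        have : a * (-(m * (w * v)) - n * c₁) + b * (m * hh) + c * (m * (w * u) + n * a₁) = 0 := by
          rw [hb]
          exact (hkey _ _ _).mpr ⟨m, n, rfl, rfl, rfl⟩
        rw [this]
        norm_num
  · intro m n h0
    have h00 := congrFun (congrFun h0 0) 0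
    have h01 := congrFun (congrFun h0 0) 1
    have h10 := congrFun (congrFun h0 1) 0
    subst hM₁ hM₂
    simp [Matrix.add_apply, Matrix.smul_apply] at h00 h01 h10
    have hm : m = 0 := by
      rcases h00 with h | h
      · exact_mod_cast h
      · exact absurd (by exact_mod_cast h) hh0
    subst hm
    simp at h01 h10
    have hac1 : ¬(a₁ = 0 ∧ c₁ = 0) := by
      rintro ⟨h1, h2⟩
      apply hg0
      rw [h1, mul_zero] at ha
      rw [h2, mul_zero] at hc
      rw [ha, hc] at huv
      simpa using huv.symm
    rcases h01 with h | h
    · exact ⟨rfl, by exact_mod_cast h⟩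
    · rcases h10 with h' | h'
      · exact ⟨rfl, by exact_mod_cast h'⟩
      · exact absurd ⟨by exact_mod_cast h, by exact_mod_cast h'⟩ hac1

/-- description of the lattice `P = L ∩ λ^⊥` as `ℤ·(l₁/2) ⊕ ℤ·l₂`
(if `μ = 0` and `gcd(a,c)` is even) resp. `ℤ·l₁ ⊕ ℤ·l₂` (otherwise). -/
theorem stmt3 (a b c : ℤ) (hac : ¬ (a = 0 ∧ c = 0)) (μ : ℤ) (hμ : μ = 0 ∨ μ = 1)
    (hbμ : b % 2 = μ % 2)
    (hprim0 : μ = 0 → Int.gcd (b / 2) (Int.gcd a c) = 1)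
    (hprim1 : μ = 1 → Int.gcd a (Int.gcd b c) = 1)
    (g u v : ℤ) (hg : g = Int.gcd a c) (huv : a * v - u * c = g)
    (lam l₁ l₂ l₁' : Matrix (Fin 2) (Fin 2) ℚ)
    (hlam : lam = !![(b : ℚ) / 2, -(a : ℚ); (c : ℚ), -(b : ℚ) / 2])
    (hl₁ : l₁ = !![(g : ℚ), ((b * u : ℤ) : ℚ); ((b * v : ℤ) : ℚ), -(g : ℚ)])
    (hl₂ : l₂ = !![0, ((a / g : ℤ) : ℚ); ((c / g : ℤ) : ℚ), 0])
    (hl₁' : l₁' = if μ = 0 ∧ Even g then (1 / 2 : ℚ) • l₁ else l₁) :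
    (∀ x : Matrix (Fin 2) (Fin 2) ℚ,
      (memL x ∧ Matrix.trace (x * lam) = 0) ↔
        ∃ m n : ℤ, x = (m : ℚ) • l₁' + (n : ℚ) • l₂) ∧
    (∀ m n : ℤ, (m : ℚ) • l₁' + (n : ℚ) • l₂ = 0 → m = 0 ∧ n = 0) := by
  have hg0 : g ≠ 0 := by
    rw [hg]
    intro h
    have : Int.gcd a c = 0 := by exact_mod_cast h
    exact hac (Int.gcd_eq_zero_iff.mp this)
  have hga : g ∣ a := hg ▸ Int.gcd_dvd_left a c
  have hgc : g ∣ c := hg ▸ Int.gcd_dvd_right a c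
  obtain ⟨a₁, ha⟩ := hga
  obtain ⟨c₁, hc⟩ := hgc
  have hag : a / g = a₁ := by rw [ha, Int.mul_ediv_cancel_left _ hg0]
  have hcg : c / g = c₁ := by rw [hc, Int.mul_ediv_cancel_left _ hg0]
  rw [hag, hcg] at hl₂
  by_cases hcase : μ = 0 ∧ Even g
  · obtain ⟨hμ0, hge⟩ := hcase
    have hg2 : g % 2 = 0 := Int.even_iff.mp hge
    have hb2 : b % 2 = 0 := by rw [hbμ, hμ0]; decide
    have hgsh : g = 2 * (g / 2) := by omega
    have hbsw : b = 2 * (b / 2) := by omega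
    have hgQ : ((g / 2 : ℤ) : ℚ) = (g : ℚ) / 2 := by
      have h : ((g : ℚ)) = 2 * ((g / 2 : ℤ) : ℚ) := by exact_mod_cast hgsh
      linarith
    have hbQ : ((b / 2 : ℤ) : ℚ) = (b : ℚ) / 2 := by
      have h : ((b : ℚ)) = 2 * ((b / 2 : ℤ) : ℚ) := by exact_mod_cast hbsw
      linarith
    have hgw : IsCoprime g (b / 2) := by
      rw [Int.isCoprime_iff_gcd_eq_one, Int.gcd_comm]
      have := hprim0 hμ0
      rwa [← hg] at this
    have hM₁ : l₁' = !![((g / 2 : ℤ) : ℚ), ((b / 2 * u : ℤ) : ℚ);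
        ((b / 2 * v : ℤ) : ℚ), -((g / 2 : ℤ) : ℚ)] := by
      rw [hl₁', if_pos ⟨hμ0, hge⟩, hl₁]
      ext i j
      fin_cases i <;> fin_cases j <;>
        simp [Matrix.smul_apply] <;> push_cast [hgQ, hbQ] <;> ring
    exact core a b c g u v (b / 2) (g / 2) 2 a₁ c₁ hg0 hgsh hbsw ha hc huv hgw
      lam l₁' l₂ hlam hM₁ hl₂
  · have hgw : IsCoprime g b := by
      rcases hμ with hμ0 | hμ1
      · have hbodd : ¬ Even g := fun h => hcase ⟨hμ0, h⟩
        have hgodd : g % 2 = 1 := by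
          rcases Int.even_or_odd g with h | h
          · exact absurd h hbodd
          · exact Int.odd_iff.mp h
        have hb2 : b % 2 = 0 := by rw [hbμ, hμ0]; decide
        have hbsw : b = 2 * (b / 2) := by omega
        have hg2 : IsCoprime g 2 := ⟨1, -(g / 2), by omega⟩
        have hgw' : IsCoprime g (b / 2) := by
          rw [Int.isCoprime_iff_gcd_eq_one, Int.gcd_comm]
          have := hprim0 hμ0
          rwa [← hg] at this
        rw [hbsw]
        exact IsCoprime.mul_right hg2 hgw'
      · rw [Int.isCoprime_iff_gcd_eq_one]
        have h1 := hprim1 hμ1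
        have h2 : Nat.gcd a.natAbs (Nat.gcd b.natAbs c.natAbs) = 1 := by
          simpa [Int.gcd] using h1
        have h3 : Nat.gcd (Nat.gcd a.natAbs c.natAbs) b.natAbs = 1 := by
          rw [Nat.gcd_assoc, Nat.gcd_comm c.natAbs b.natAbs]
          exact h2
        simp only [Int.gcd, hg, Int.natAbs_natCast]
        exact h3
    have hM₁ : l₁' = !![(g : ℚ), ((b * u : ℤ) : ℚ); ((b * v : ℤ) : ℚ), -(g : ℚ)] := by
      rw [hl₁', if_neg hcase, hl₁]
    exact core a b c g u v b g 1 a₁ c₁ hg0 (one_mul g).symm (one_mul b).symm ha hc huv hgw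
      lam l₁' l₂ hlam hM₁ hl₂
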